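/- For every n ≥ 1 and all x, y ∈ [−1,1]^n, the painting encodings satisfy λ(I^+(x) △ I^+(y)) ≤ Σ_{ℓ=1}^n |x_ℓ − y_ℓ| (in particular λ(I^+(x) △ I^+(y)) ≤ n·∥x − y∥_∞), where λ is Lebesgue measure and △ the symmetric difference. -/
import Mathlib


open MeasureTheory Set

/-- The painting encoding `I⁺(x) ⊆ [0,1]` of a point `x ∈ [−1,1]^n`: `0 ∈ I⁺(x)`, and
`t ∈ (0,1]` belongs to `I⁺(x)` iff either no index `ℓ` satisfies `|x_ℓ| ≥ t`, or the
largest such index `ℓ*` satisfies `x_{ℓ*} > 0`. -/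
def paintPlus (n : ℕ) (x : Fin n → ℝ) : Set ℝ :=
  {t | t = 0 ∨ (0 < t ∧ t ≤ 1 ∧
    ((∀ ℓ : Fin n, |x ℓ| < t) ∨
      ∃ ℓ : Fin n, t ≤ |x ℓ| ∧ 0 < x ℓ ∧ ∀ m : Fin n, ℓ < m → |x m| < t))}

lemma paint_aux (n : ℕ) (x y : Fin n → ℝ) (t : ℝ)
    (h1 : ∀ ℓ, t ≤ |x ℓ| ↔ t ≤ |y ℓ|)
    (h2 : ∀ ℓ, t ≤ |x ℓ| → (0 < x ℓ ↔ 0 < y ℓ)) :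
    t ∈ paintPlus n x → t ∈ paintPlus n y := by
  rintro (rfl | ⟨ht0, ht1, hC⟩)
  · exact Or.inl rfl
  refine Or.inr ⟨ht0, ht1, ?_⟩
  rcases hC with hall | ⟨ℓ, hℓ1, hℓ2, hℓ3⟩
  · exact Or.inl fun ℓ => not_le.mp fun h => (not_le.mpr (hall ℓ)) ((h1 ℓ).mpr h)
  · exact Or.inr ⟨ℓ, (h1 ℓ).mp hℓ1, (h2 ℓ hℓ1).mp hℓ2,
      fun m hm => not_le.mp fun h => (not_le.mpr (hℓ3 m hm)) ((h1 m).mpr h)⟩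

/-- The painting encodings satisfy
`λ(I⁺(x) △ I⁺(y)) ≤ Σ_ℓ |x_ℓ − y_ℓ|`, and in particular `≤ n·‖x − y‖_∞`. -/
theorem stmt7 (n : ℕ) (hn : 1 ≤ n) (x y : Fin n → ℝ)
    (hx : ∀ ℓ, x ℓ ∈ Icc (-1:ℝ) 1) (hy : ∀ ℓ, y ℓ ∈ Icc (-1:ℝ) 1) :
    (volume (symmDiff (paintPlus n x) (paintPlus n y))).toReal ≤ ∑ ℓ, |x ℓ - y ℓ| ∧
    (volume (symmDiff (paintPlus n x) (paintPlus n y))).toReal ≤ (n : ℝ) * ‖x - y‖ := by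
  set T : Fin n → Set ℝ := fun ℓ =>
    if x ℓ * y ℓ < 0 then Ioc 0 (max |x ℓ| |y ℓ|)
    else Ioc (min |x ℓ| |y ℓ|) (max |x ℓ| |y ℓ|) with hT
  -- containment
  have hsub : symmDiff (paintPlus n x) (paintPlus n y) ⊆ ⋃ ℓ, T ℓ := by
    intro t ht
    by_contra hmem
    simp only [mem_iUnion, not_exists] at hmem
    -- t ≠ 0
    have ht0 : 0 < t := by
      rcases Set.mem_symmDiff.mp ht with ⟨hA, hB⟩ | ⟨hB, hA⟩
      · rcases hA with rfl | ⟨h, _⟩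
        · exact absurd (Or.inl rfl) hB
        · exact h
      · rcases hB with rfl | ⟨h, _⟩
        · exact absurd (Or.inl rfl) hA
        · exact h
    have key : ∀ ℓ, (t ≤ |x ℓ| ↔ t ≤ |y ℓ|) ∧ (t ≤ |x ℓ| → (0 < x ℓ ↔ 0 < y ℓ)) := by
      intro ℓ
      have hm := hmem ℓ
      rw [hT] at hm
      by_cases hprod : x ℓ * y ℓ < 0
      · simp only [if_pos hprod, mem_Ioc, not_and, not_le] at hm
        have hmax := hm ht0
        constructor
        · constructor
          · intro h; exfalso; have := le_max_left |x ℓ| |y ℓ|; linarith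
          · intro h; exfalso; have := le_max_right |x ℓ| |y ℓ|; linarith
        · intro h; exfalso; have := le_max_left |x ℓ| |y ℓ|; linarith
      · simp only [if_neg hprod, mem_Ioc, not_and, not_le] at hm
        push_neg at hprod
        rcases le_or_gt t (min |x ℓ| |y ℓ|) with hmin | hmin
        · have hx' : t ≤ |x ℓ| := le_trans hmin (min_le_left _ _)
          have hy' : t ≤ |y ℓ| := le_trans hmin (min_le_right _ _)
          refine ⟨⟨fun _ => hy', fun _ => hx'⟩, fun _ => ?_⟩
          have hxne : x ℓ ≠ 0 := by
            intro h; rw [h] at hx'; simp at hx'; linarith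
          have hyne : y ℓ ≠ 0 := by
            intro h; rw [h] at hy'; simp at hy'; linarith
          constructor
          · intro hpos
            rcases lt_trichotomy (y ℓ) 0 with h | h | h
            · nlinarith
            · exact absurd h hyne
            · exact h
          · intro hpos
            rcases lt_trichotomy (x ℓ) 0 with h | h | h
            · nlinarith
            · exact absurd h hxne
            · exact h
        · have hmax := hm hmin
          have h1 : |x ℓ| < t := lt_of_le_of_lt (le_max_left _ _) hmax
          have h2 : |y ℓ| < t := lt_of_le_of_lt (le_max_right _ _) hmax
          exact ⟨⟨fun h => absurd h (not_le.mpr h1), fun h => absurd h (not_le.mpr h2)⟩,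
            fun h => absurd h (not_le.mpr h1)⟩
    have h1 : ∀ ℓ, t ≤ |x ℓ| ↔ t ≤ |y ℓ| := fun ℓ => (key ℓ).1
    have h2 : ∀ ℓ, t ≤ |x ℓ| → (0 < x ℓ ↔ 0 < y ℓ) := fun ℓ => (key ℓ).2
    have h2' : ∀ ℓ, t ≤ |y ℓ| → (0 < y ℓ ↔ 0 < x ℓ) := fun ℓ h =>
      ((key ℓ).2 ((h1 ℓ).mpr h)).symm
    rcases Set.mem_symmDiff.mp ht with ⟨hA, hB⟩ | ⟨hB, hA⟩
    · exact hB (paint_aux n x y t h1 h2 hA)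
    · exact hA (paint_aux n y x t (fun ℓ => (h1 ℓ).symm) h2' hB)
  -- volume bound for pieces
  have hvol : ∀ ℓ, volume (T ℓ) ≤ ENNReal.ofReal |x ℓ - y ℓ| := by
    intro ℓ
    rw [hT]
    by_cases hprod : x ℓ * y ℓ < 0
    · simp only [if_pos hprod]
      rw [Real.volume_Ioc]
      apply ENNReal.ofReal_le_ofReal
      rcases abs_cases (x ℓ) with ⟨hx1, hx2⟩ | ⟨hx1, hx2⟩ <;>
        rcases abs_cases (y ℓ) with ⟨hy1, hy2⟩ | ⟨hy1, hy2⟩ <;>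
        rcases abs_cases (x ℓ - y ℓ) with ⟨hz1, hz2⟩ | ⟨hz1, hz2⟩ <;>
        rw [max_def] <;> split <;> nlinarith
    · simp only [if_neg hprod]
      rw [Real.volume_Ioc]
      apply ENNReal.ofReal_le_ofReal
      have heq : max |x ℓ| |y ℓ| - min |x ℓ| |y ℓ| = abs (|y ℓ| - |x ℓ|) :=
        max_sub_min_eq_abs _ _
      rw [heq]
      rw [abs_sub_comm (x ℓ)]
      exact abs_abs_sub_abs_le_abs_sub _ _
  have hmeas : volume (symmDiff (paintPlus n x) (paintPlus n y)) ≤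
      ENNReal.ofReal (∑ ℓ, |x ℓ - y ℓ|) := by
    calc volume (symmDiff (paintPlus n x) (paintPlus n y))
        ≤ volume (⋃ ℓ, T ℓ) := measure_mono hsub
      _ ≤ ∑ ℓ, volume (T ℓ) := measure_iUnion_fintype_le _ _
      _ ≤ ∑ ℓ, ENNReal.ofReal |x ℓ - y ℓ| := Finset.sum_le_sum fun ℓ _ => hvol ℓ
      _ = ENNReal.ofReal (∑ ℓ, |x ℓ - y ℓ|) := by
          rw [ENNReal.ofReal_sum_of_nonneg fun ℓ _ => abs_nonneg _]
  have hfirst : (volume (symmDiff (paintPlus n x) (paintPlus n y))).toReal ≤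
      ∑ ℓ, |x ℓ - y ℓ| :=
    ENNReal.toReal_le_of_le_ofReal (Finset.sum_nonneg fun ℓ _ => abs_nonneg _) hmeas
  refine ⟨hfirst, hfirst.trans ?_⟩
  calc ∑ ℓ, |x ℓ - y ℓ| ≤ ∑ _ℓ : Fin n, ‖x - y‖ := by
        apply Finset.sum_le_sum
        intro ℓ _
        have := norm_le_pi_norm (x - y) ℓ
        simpa using this
    _ = (n : ℝ) * ‖x - y‖ := by simp [Finset.sum_const, mul_comm]
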